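/- arXiv:2002.11382 — 3 statements merged into one kernel-verified Lean document; each statement's English description precedes it below -/
import Mathlib

section
/- If f : [0,1] → ℝ is a positive, differentiable probability density whose logarithm is concave, then the reliability function F̄(x) = 1 - F(x) = ∫_x^1 f(t) dt is also log-concave on [0,1), i.e., log F̄ is concave. -/
open Real Set intervalIntegral

/-- If `f` is a positive, differentiable probability density on `[0,1]` whose logarithm is
concave, then the reliability function `F̄(x) = 1 - F(x) = ∫_x^1 f` is log-concave on `[0,1)`. -/
theorem logconcave_reliability
    (f : ℝ → ℝ)
    (hpos : ∀ x ∈ Icc (0:ℝ) 1, 0 < f x)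
    (hdiff : DifferentiableOn ℝ f (Icc (0:ℝ) 1))
    (hdensity : ∫ t in (0:ℝ)..1, f t = 1)
    (hlogconc : ConcaveOn ℝ (Icc (0:ℝ) 1) (fun x => Real.log (f x))) :
    ConcaveOn ℝ (Ico (0:ℝ) 1) (fun x => Real.log (∫ t in x..1, f t)) := by
  have hcont : ContinuousOn f (Icc (0:ℝ) 1) := hdiff.continuousOn
  have h1 : (1:ℝ) ∈ Icc (0:ℝ) 1 := by norm_num
  have hII : ∀ a b : ℝ, a ∈ Icc (0:ℝ) 1 → b ∈ Icc (0:ℝ) 1 →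
      IntervalIntegrable f MeasureTheory.volume a b := fun a b ha hb =>
    (hcont.mono (uIcc_subset_Icc ha hb)).intervalIntegrable
  have Rpos : ∀ x ∈ Ico (0:ℝ) 1, 0 < ∫ t in x..1, f t := by
    intro x hx
    exact intervalIntegral_pos_of_pos_on (hII x 1 ⟨hx.1, hx.2.le⟩ h1)
      (fun t ht => hpos t ⟨hx.1.trans ht.1.le, ht.2.le⟩) hx.2
  -- Key inequality: increasing hazard rate
  have key : ∀ x ∈ Icc (0:ℝ) 1, ∀ y ∈ Icc (0:ℝ) 1, x ≤ y →
      f x * ∫ t in y..1, f t ≤ f y * ∫ t in x..1, f t := by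
    intro x hx y hy hxy
    rcases eq_or_lt_of_le hxy with rfl | hlt
    · exact le_refl _
    set d := y - x with hd
    have hd0 : 0 < d := sub_pos.mpr hlt
    have hxd1 : x ≤ 1 - d := by have := hy.2; linarith
    -- pointwise inequality from log-concavity
    have hpt : ∀ s ∈ Icc x (1 - d), f x * f (s + d) ≤ f y * f s := by
      intro s hs
      have hsx : x ≤ s := hs.1
      have hsd1 : s + d ≤ 1 := by have := hs.2; linarith
      have hsmem : s ∈ Icc (0:ℝ) 1 := ⟨hx.1.trans hsx, by linarith⟩
      have hsdmem : s + d ∈ Icc (0:ℝ) 1 := ⟨by have := hx.1; linarith, hsd1⟩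
      have hden : 0 < s + d - x := by linarith
      set a := d / (s + d - x) with ha
      set b := (s - x) / (s + d - x) with hb
      have hab : a + b = 1 := by rw [ha, hb]; field_simp; ring
      have ha0 : 0 ≤ a := div_nonneg hd0.le hden.le
      have hb0 : 0 ≤ b := div_nonneg (by linarith) hden.le
      have h1' := hlogconc.2 hx hsdmem hb0 ha0 (by linarith)
      have h2' := hlogconc.2 hx hsdmem ha0 hb0 hab
      have e1 : b • x + a • (s + d) = y := by
        rw [smul_eq_mul, smul_eq_mul, ha, hb, div_mul_eq_mul_div, div_mul_eq_mul_div, ← add_div,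
          div_eq_iff hden.ne', hd]; ring
      have e2 : a • x + b • (s + d) = s := by
        rw [smul_eq_mul, smul_eq_mul, ha, hb, div_mul_eq_mul_div, div_mul_eq_mul_div, ← add_div,
          div_eq_iff hden.ne']; ring
      rw [e1] at h1'
      rw [e2] at h2'
      simp only [smul_eq_mul] at h1' h2'
      have hsum : log (f x) + log (f (s + d)) ≤ log (f y) + log (f s) := by
        have e : log (f x) + log (f (s + d)) =
            (b * log (f x) + a * log (f (s + d))) +
              (a * log (f x) + b * log (f (s + d))) := by
          linear_combination (log (f x) + log (f (s + d))) * hab.symm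
        rw [e]
        exact add_le_add h1' h2'
      have hfx := hpos x hx
      have hfy := hpos y hy
      have hfs := hpos s hsmem
      have hfsd := hpos (s + d) hsdmem
      calc f x * f (s + d) = exp (log (f x) + log (f (s + d))) := by
            rw [exp_add, exp_log hfx, exp_log hfsd]
        _ ≤ exp (log (f y) + log (f s)) := exp_le_exp.mpr hsum
        _ = f y * f s := by rw [exp_add, exp_log hfy, exp_log hfs]
    have cv : (∫ s in x..(1 - d), f (s + d)) = ∫ t in y..1, f t := by
      rw [integral_comp_add_right f d, show x + d = y by rw [hd]; ring,
        show 1 - d + d = 1 by ring]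
    have hmaps : ∀ s ∈ uIcc x (1 - d), s + d ∈ Icc (0:ℝ) 1 := by
      intro s hs
      rw [uIcc_of_le hxd1] at hs
      exact ⟨by have := hx.1; have := hs.1; linarith, by have := hs.2; linarith⟩
    have hint1 : IntervalIntegrable (fun s => f x * f (s + d)) MeasureTheory.volume x (1 - d) := by
      apply ContinuousOn.intervalIntegrable
      exact continuousOn_const.mul
        (hcont.comp ((continuous_add_right d).continuousOn) hmaps)
    have hint2 : IntervalIntegrable (fun s => f y * f s) MeasureTheory.volume x (1 - d) := by
      apply ContinuousOn.intervalIntegrable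
      refine continuousOn_const.mul (hcont.mono ?_)
      rw [uIcc_of_le hxd1]
      exact Icc_subset_Icc hx.1 (by linarith)
    have hnn : 0 ≤ ∫ s in (1 - d)..1, f s := by
      apply intervalIntegral.integral_nonneg (by linarith)
      intro u hu
      exact (hpos u ⟨(hx.1.trans hxd1).trans hu.1, hu.2⟩).le
    have hsplit : (∫ s in x..(1 - d), f s) + ∫ s in (1 - d)..1, f s = ∫ s in x..1, f s :=
      integral_add_adjacent_intervals
        (hII x (1 - d) hx ⟨by linarith [hx.1], by linarith⟩)
        (hII (1 - d) 1 ⟨by linarith [hx.1], by linarith⟩ h1)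
    calc f x * ∫ t in y..1, f t = ∫ s in x..(1 - d), f x * f (s + d) := by
          rw [← cv, intervalIntegral.integral_const_mul]
      _ ≤ ∫ s in x..(1 - d), f y * f s := integral_mono_on hxd1 hint1 hint2 hpt
      _ = f y * ∫ s in x..(1 - d), f s := intervalIntegral.integral_const_mul _ _
      _ ≤ f y * ∫ t in x..1, f t := by
          apply mul_le_mul_of_nonneg_left _ (hpos y hy).le
          rw [← hsplit]
          linarith
  -- derivative of log R on the interior
  have hDeriv : ∀ x ∈ Ioo (0:ℝ) 1,
      HasDerivAt (fun u => ∫ t in u..1, f t) (-f x) x := by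
    intro x hx
    have hmeas : StronglyMeasurableAtFilter f (nhds x) MeasureTheory.volume :=
      ⟨Ioo 0 1, Ioo_mem_nhds hx.1 hx.2,
        (hcont.mono Ioo_subset_Icc_self).aestronglyMeasurable measurableSet_Ioo⟩
    have hca : ContinuousAt f x :=
      hcont.continuousAt (Icc_mem_nhds hx.1 hx.2)
    exact integral_hasDerivAt_left (hII x 1 ⟨hx.1.le, hx.2.le⟩ h1) hmeas hca
  have hlogDeriv : ∀ x ∈ Ioo (0:ℝ) 1,
      HasDerivAt (fun u => Real.log (∫ t in u..1, f t))
        (-f x / ∫ t in x..1, f t) x := by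
    intro x hx
    exact (hDeriv x hx).log (Rpos x ⟨hx.1.le, hx.2⟩).ne'
  -- continuity of log R on Ico 0 1
  have hIntOn : MeasureTheory.IntegrableOn f (uIcc (0:ℝ) 1) MeasureTheory.volume := by
    rw [uIcc_of_le zero_le_one]
    exact hcont.integrableOn_Icc
  have hRcont : ContinuousOn (fun x => ∫ t in x..1, f t) (Icc (0:ℝ) 1) := by
    have := continuousOn_primitive_interval_left (f := f) (a := (0:ℝ)) (b := 1) hIntOn
    rwa [uIcc_of_le zero_le_one] at this
  have hlogRcont : ContinuousOn (fun x => Real.log (∫ t in x..1, f t)) (Ico (0:ℝ) 1) :=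
    (hRcont.mono Ico_subset_Icc_self).log fun x hx => (Rpos x hx).ne'
  -- assemble
  have hintIco : interior (Ico (0:ℝ) 1) = Ioo (0:ℝ) 1 := interior_Ico
  apply AntitoneOn.concaveOn_of_deriv (convex_Ico (0:ℝ) 1) hlogRcont
  · rw [hintIco]
    intro x hx
    exact ((hlogDeriv x hx).differentiableAt).differentiableWithinAt
  · rw [hintIco]
    intro a ha b hb hab
    rw [(hlogDeriv a ha).deriv, (hlogDeriv b hb).deriv]
    rw [neg_div, neg_div, neg_le_neg_iff]
    rw [div_le_div_iff₀ (Rpos a ⟨ha.1.le, ha.2⟩) (Rpos b ⟨hb.1.le, hb.2⟩)]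
    exact key a ⟨ha.1.le, ha.2.le⟩ b ⟨hb.1.le, hb.2.le⟩ hab
end

section
/- Let F̄ : [0,1] → (0,∞) be log-concave and w : [0,1] → ℝ be concave and nonnegative. Then for nonnegative c_1, …, c_n with c_1 + ⋯ + c_n = 1, the quantity (∏_{i=1}^n F̄(c_i)) · (∑_{i=1}^n w(c_i)) is at most F̄(1/n)^n · n · w(1/n). -/
open Real Set Finset

/-- If `Fbar` is positive log-concave and `w` is nonnegative concave on `[0,1]`, then for
nonnegative cost shares summing to `1`,
`(∏ Fbar(c i)) · (∑ w(c i)) ≤ Fbar(1/n)^n · n · w(1/n)`. -/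
theorem prod_mul_sum_le
    (Fbar w : ℝ → ℝ)
    (hpos : ∀ x ∈ Icc (0:ℝ) 1, 0 < Fbar x)
    (hlogconc : ConcaveOn ℝ (Icc (0:ℝ) 1) (fun x => Real.log (Fbar x)))
    (hwconc : ConcaveOn ℝ (Icc (0:ℝ) 1) w)
    (hwnonneg : ∀ x ∈ Icc (0:ℝ) 1, 0 ≤ w x)
    (n : ℕ) (hn : 1 ≤ n)
    (c : Fin n → ℝ)
    (hc : ∀ i, 0 ≤ c i)
    (hsum : ∑ i, c i = 1) :
    (∏ i, Fbar (c i)) * (∑ i, w (c i)) ≤ (Fbar (1 / n)) ^ n * (n * w (1 / n)) := by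
  have hn0 : (0:ℝ) < n := by exact_mod_cast hn
  have hc1 : ∀ i, c i ≤ 1 := by
    intro i
    calc c i ≤ ∑ j, c j := Finset.single_le_sum (fun j _ => hc j) (Finset.mem_univ i)
    _ = 1 := hsum
  have hmem : ∀ i ∈ Finset.univ, c i ∈ Icc (0:ℝ) 1 := fun i _ => ⟨hc i, hc1 i⟩
  have hw0 : ∀ i ∈ (Finset.univ : Finset (Fin n)), (0:ℝ) ≤ (n:ℝ)⁻¹ := fun _ _ =>
    inv_nonneg.2 hn0.le
  have hw1 : ∑ _i : Fin n, (n:ℝ)⁻¹ = 1 := by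
    simp [Finset.sum_const]
    field_simp
  have hcenter : ∑ i, (n:ℝ)⁻¹ • c i = 1 / n := by
    rw [← Finset.smul_sum, hsum]
    simp [one_div]
  have hmean : (1:ℝ)/n ∈ Icc (0:ℝ) 1 := by
    constructor
    · positivity
    · rw [div_le_one hn0]; exact_mod_cast hn
  -- sum inequality
  have hsumw : ∑ i, w (c i) ≤ n * w (1/n) := by
    have := hwconc.le_map_sum hw0 hw1 hmem
    rw [hcenter] at this
    rw [show ∑ i, (n:ℝ)⁻¹ • w (c i) = (n:ℝ)⁻¹ * ∑ i, w (c i) by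
      rw [← Finset.smul_sum]; simp] at this
    calc ∑ i, w (c i) = n * ((n:ℝ)⁻¹ * ∑ i, w (c i)) := by field_simp
    _ ≤ n * w (1/n) := by
        exact mul_le_mul_of_nonneg_left this hn0.le
  -- product inequality
  have hprodpos : 0 < ∏ i, Fbar (c i) :=
    Finset.prod_pos (fun i _ => hpos _ (hmem i (Finset.mem_univ i)))
  have hFpos : 0 < Fbar (1/n) := hpos _ hmean
  have hlog : ∑ i, (n:ℝ)⁻¹ • Real.log (Fbar (c i)) ≤ Real.log (Fbar (1/n)) := by
    have := hlogconc.le_map_sum hw0 hw1 hmem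
    rwa [hcenter] at this
  have hprod : ∏ i, Fbar (c i) ≤ Fbar (1/n) ^ n := by
    rw [← Real.log_le_log_iff hprodpos (by positivity)]
    rw [Real.log_prod (fun i _ => (hpos _ (hmem i (Finset.mem_univ i))).ne'),
      Real.log_pow]
    have h2 : ∑ i, (n:ℝ)⁻¹ • Real.log (Fbar (c i))
        = (n:ℝ)⁻¹ * ∑ i, Real.log (Fbar (c i)) := by
      rw [← Finset.smul_sum]; simp
    rw [h2] at hlog
    calc ∑ i, Real.log (Fbar (c i)) = n * ((n:ℝ)⁻¹ * ∑ i, Real.log (Fbar (c i))) := by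
          field_simp
    _ ≤ n * Real.log (Fbar (1/n)) := mul_le_mul_of_nonneg_left hlog hn0.le
  have hsumnn : 0 ≤ ∑ i, w (c i) :=
    Finset.sum_nonneg fun i _ => hwnonneg _ (hmem i (Finset.mem_univ i))
  exact mul_le_mul hprod hsumw hsumnn (by positivity)
end

section
/- Let F̄ : [0,1] → (0,∞) be log-concave, w : [0,1] → ℝ≥0 be concave, and F = 1 - F̄ be concave (i.e., the density is nonincreasing). For any nonnegative a, b, c with a + b + c = 1, F̄(a)·F̄(b)·F̄(c)·(w(a) + w(b) + w(c)) + 2·F̄(1/2)^2·w(1/2)·(F(a) + F(b) + F(c)) ≤ F̄(1/3)^3·3·w(1/3) + 2·F̄(1/2)^2·w(1/2)·3·F(1/3). -/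
open Real Set

lemma jensen3_aux (f : ℝ → ℝ) (hf : ConcaveOn ℝ (Icc (0:ℝ) 1) f)
    (a b c : ℝ) (ha : 0 ≤ a) (hb : 0 ≤ b) (hc : 0 ≤ c)
    (hsum : a + b + c = 1) :
    f a + f b + f c ≤ 3 * f (1/3) := by
  have ha' : a ∈ Icc (0:ℝ) 1 := ⟨ha, by linarith⟩
  have hb' : b ∈ Icc (0:ℝ) 1 := ⟨hb, by linarith⟩
  have hc' : c ∈ Icc (0:ℝ) 1 := ⟨hc, by linarith⟩
  have hm : (1/2 : ℝ) * a + (1/2) * b ∈ Icc (0:ℝ) 1 := ⟨by linarith, by linarith⟩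
  have h1 := hf.2 ha' hb' (by norm_num : (0:ℝ) ≤ 1/2) (by norm_num : (0:ℝ) ≤ 1/2)
    (by norm_num)
  have h2 := hf.2 hm hc' (by norm_num : (0:ℝ) ≤ 2/3) (by norm_num : (0:ℝ) ≤ 1/3)
    (by norm_num)
  simp only [smul_eq_mul] at h1 h2
  have heq : (2/3 : ℝ) * ((1/2) * a + (1/2) * b) + (1/3) * c = 1/3 := by linarith
  rw [heq] at h2
  nlinarith

/-- Combined inequality for the 3-agent excludable public project (welfare objective):
equal shares maximize the sum of the size-3 and size-2 coalition welfare terms. -/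
theorem three_agent_welfare_inequality
    (Fbar w F : ℝ → ℝ)
    (hpos : ∀ x ∈ Icc (0:ℝ) 1, 0 < Fbar x)
    (hlogconc : ConcaveOn ℝ (Icc (0:ℝ) 1) (fun x => Real.log (Fbar x)))
    (hwconc : ConcaveOn ℝ (Icc (0:ℝ) 1) w)
    (hwnonneg : ∀ x ∈ Icc (0:ℝ) 1, 0 ≤ w x)
    (hFdef : ∀ x, F x = 1 - Fbar x)
    (hFconc : ConcaveOn ℝ (Icc (0:ℝ) 1) F)
    (a b c : ℝ) (ha : 0 ≤ a) (hb : 0 ≤ b) (hc : 0 ≤ c)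
    (hsum : a + b + c = 1) :
    Fbar a * Fbar b * Fbar c * (w a + w b + w c)
      + 2 * (Fbar (1/2))^2 * w (1/2) * (F a + F b + F c)
    ≤ (Fbar (1/3))^3 * (3 * w (1/3))
      + 2 * (Fbar (1/2))^2 * w (1/2) * (3 * F (1/3)) := by
  have ha' : a ∈ Icc (0:ℝ) 1 := ⟨ha, by linarith⟩
  have hb' : b ∈ Icc (0:ℝ) 1 := ⟨hb, by linarith⟩
  have hc' : c ∈ Icc (0:ℝ) 1 := ⟨hc, by linarith⟩
  have h3 : (1/3 : ℝ) ∈ Icc (0:ℝ) 1 := by constructor <;> norm_num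
  have h2 : (1/2 : ℝ) ∈ Icc (0:ℝ) 1 := by constructor <;> norm_num
  have hpa := hpos a ha'
  have hpb := hpos b hb'
  have hpc := hpos c hc'
  have hp3 := hpos _ h3
  have hp2 := hpos _ h2
  -- product inequality via log-concavity
  have hlog : Real.log (Fbar a) + Real.log (Fbar b) + Real.log (Fbar c)
      ≤ 3 * Real.log (Fbar (1/3)) :=
    jensen3_aux _ hlogconc a b c ha hb hc hsum
  have hprod : Fbar a * Fbar b * Fbar c ≤ (Fbar (1/3))^3 := by
    have : Real.log (Fbar a * Fbar b * Fbar c) ≤ Real.log ((Fbar (1/3))^3) := by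
      rw [Real.log_mul (by positivity) (by positivity), Real.log_mul hpa.ne' hpb.ne',
        Real.log_pow]
      push_cast
      linarith
    exact (Real.log_le_log_iff (by positivity) (by positivity)).mp this
  have hw : w a + w b + w c ≤ 3 * w (1/3) :=
    jensen3_aux _ hwconc a b c ha hb hc hsum
  have hF : F a + F b + F c ≤ 3 * F (1/3) :=
    jensen3_aux _ hFconc a b c ha hb hc hsum
  have hwsum : 0 ≤ w a + w b + w c := by
    have := hwnonneg a ha'; have := hwnonneg b hb'; have := hwnonneg c hc'
    linarith
  have hcoef : 0 ≤ 2 * (Fbar (1/2))^2 * w (1/2) := by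
    have := hwnonneg _ h2; positivity
  have hterm1 : Fbar a * Fbar b * Fbar c * (w a + w b + w c)
      ≤ (Fbar (1/3))^3 * (3 * w (1/3)) :=
    mul_le_mul hprod hw hwsum (by positivity)
  nlinarith [mul_le_mul_of_nonneg_left hF hcoef]
end
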